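/- Let s be an irrational real number and let (J_l)_{l∈ℕ} be a sequence of pairwise disjoint intervals of natural numbers with lengths |J_l| → ∞ whose union has full natural density, and let (d_l) be complex numbers with |d_l| ≤ 1. Define C'(n) = Σ_l 𝟙_{J_l}(n) · d_l. Then lim_{N→∞} (1/N) Σ_{n=1}^{N} e(ns) · C'(n) = 0. -/

import Mathlib

open Finset Filter Complex
open scoped Classical

theorem stmt11 (s : ℝ) (hs : Irrational s)
    (a L : ℕ → ℕ) (hL : Tendsto L atTop atTop)
    (hdisj : Pairwise fun l l' => Disjoint (Set.Ico (a l) (a l + L l)) (Set.Ico (a l') (a l' + L l')))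
    (hdens : Tendsto (fun N : ℕ =>
        (((Finset.range N).filter fun n => ∃ l, n ∈ Set.Ico (a l) (a l + L l)).card : ℝ) / N)
      atTop (nhds 1))
    (d : ℕ → ℂ) (hd : ∀ l, ‖d l‖ ≤ 1)
    (C' : ℕ → ℂ)
    (hC'1 : ∀ l, ∀ n ∈ Set.Ico (a l) (a l + L l), C' n = d l)
    (hC'0 : ∀ n, (∀ l, n ∉ Set.Ico (a l) (a l + L l)) → C' n = 0) :
    Tendsto (fun N : ℕ =>
        (1 / (N : ℂ)) * ∑ n ∈ Finset.Icc 1 N,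
          Complex.exp (2 * Real.pi * Complex.I * (n * s)) * C' n)
      atTop (nhds 0) := by
  classical
  set z : ℂ := Complex.exp (2 * Real.pi * Complex.I * s) with hz_def
  have h2pi : (2 * (Real.pi : ℂ) * Complex.I) ≠ 0 := by
    simp [Real.pi_ne_zero, Complex.I_ne_zero]
  have hz1 : z ≠ 1 := by
    intro h
    rw [hz_def, Complex.exp_eq_one_iff] at h
    obtain ⟨n, hn⟩ := h
    have hsn : 2 * (Real.pi : ℂ) * Complex.I * (s : ℂ)
        = 2 * (Real.pi : ℂ) * Complex.I * (n : ℂ) := by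
      push_cast at hn ⊢
      linear_combination hn
    have h1 : (s : ℂ) = (n : ℂ) := mul_left_cancel₀ h2pi hsn
    have h2 : s = (n : ℝ) := by exact_mod_cast h1
    exact hs.ne_int n h2
  have hz_abs : ‖z‖ = 1 := by
    have h1 : 2 * (Real.pi : ℂ) * Complex.I * (s : ℂ)
        = ((2 * Real.pi * s : ℝ) : ℂ) * Complex.I := by push_cast; ring
    rw [hz_def, h1, Complex.norm_exp_ofReal_mul_I]
  have h1z : 0 < ‖1 - z‖ :=
    norm_pos_iff.mpr (sub_ne_zero.mpr (Ne.symm hz1))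
  set B : ℝ := 2 / ‖1 - z‖ with hB_def
  have hB : 0 < B := by positivity
  -- geometric sum bound
  have hgeo : ∀ p q : ℕ, ‖∑ n ∈ Finset.Ico p q, z ^ n‖ ≤ B := by
    intro p q
    rcases le_or_gt p q with h | h
    · rw [geom_sum_Ico hz1 h, norm_div]
      have h1 : ‖z ^ q - z ^ p‖ ≤ 2 := by
        calc ‖z ^ q - z ^ p‖
            ≤ ‖z ^ q‖ + ‖z ^ p‖ := by
              simpa [sub_eq_add_neg] using norm_add_le (z ^ q) (-(z ^ p))
          _ = 2 := by rw [norm_pow, norm_pow, hz_abs]; norm_num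
      have h2 : ‖z - 1‖ = ‖1 - z‖ := by
        rw [← norm_neg]; ring_nf
      rw [h2, hB_def]
      gcongr
    · rw [Finset.Ico_eq_empty (by omega : ¬ p < q)]
      simpa using hB.le
  have hexp : ∀ n : ℕ, Complex.exp (2 * Real.pi * Complex.I * (n * s)) = z ^ n := by
    intro n
    rw [hz_def, ← Complex.exp_nat_mul]
    congr 1
    push_cast
    ring
  rw [NormedAddCommGroup.tendsto_nhds_zero]
  intro ε hε
  set δ : ℝ := ε / 4 with hδ_def
  have hδ : 0 < δ := by positivity
  set M : ℕ := ⌈B / δ⌉₊ + 1 with hM_def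
  have hM : B ≤ δ * ((M : ℝ) - 1) := by
    have h1 : B / δ ≤ (⌈B / δ⌉₊ : ℝ) := Nat.le_ceil _
    have h2 : ((M : ℝ) - 1) = (⌈B / δ⌉₊ : ℝ) := by
      rw [hM_def]; push_cast; ring
    rw [h2]
    rw [div_le_iff₀ hδ] at h1
    linarith
  obtain ⟨l0, hl0⟩ : ∃ l0, ∀ l ≥ l0, M ≤ L l :=
    eventually_atTop.mp (hL.eventually_ge_atTop M)
  set N0 : ℕ := max 1 ⌈(B * l0 + B) / δ⌉₊ with hN0_def
  filter_upwards [eventually_ge_atTop N0] with N hN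
  have hN1 : 1 ≤ N := le_trans (le_max_left _ _) hN
  have hNpos : (0 : ℝ) < (N : ℝ) := by exact_mod_cast hN1
  have hNδ : B * l0 + B ≤ δ * N := by
    have h1 : (⌈(B * l0 + B) / δ⌉₊ : ℝ) ≤ (N : ℝ) := by
      exact_mod_cast le_trans (le_max_right _ _) hN
    have h2 : (B * l0 + B) / δ ≤ (N : ℝ) := le_trans (Nat.le_ceil _) h1
    rw [div_le_iff₀ hδ] at h2
    linarith
  -- set up the decomposition
  set G : Finset ℕ := (Finset.Icc 1 N).filter
      (fun n => ∃ l, n ∈ Set.Ico (a l) (a l + L l)) with hG_def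
  set f : ℕ → ℕ := fun n =>
      if h : ∃ l, n ∈ Set.Ico (a l) (a l + L l) then h.choose else 0 with hf_def
  have hf : ∀ n, (∃ l, n ∈ Set.Ico (a l) (a l + L l)) →
      n ∈ Set.Ico (a (f n)) (a (f n) + L (f n)) := by
    intro n h
    simp only [hf_def, dif_pos h]
    exact h.choose_spec
  set piece : ℕ → Finset ℕ :=
      fun l => Finset.Ico (max 1 (a l)) (min (N + 1) (a l + L l)) with hpiece_def
  have hpiece_mem : ∀ l n, n ∈ piece l ↔
      ((1 ≤ n ∧ n ≤ N) ∧ (a l ≤ n ∧ n < a l + L l)) := by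
    intro l n
    simp only [hpiece_def, Finset.mem_Ico, max_le_iff, lt_min_iff]
    omega
  have hpiece_sub : ∀ l, ∀ n ∈ piece l, n ∈ Set.Ico (a l) (a l + L l) := by
    intro l n hn
    rw [hpiece_mem] at hn
    exact ⟨hn.2.1, hn.2.2⟩
  have hpiece_Icc : ∀ l, piece l ⊆ Finset.Icc 1 N := by
    intro l n hn
    rw [hpiece_mem] at hn
    exact Finset.mem_Icc.mpr ⟨hn.1.1, hn.1.2⟩
  have hpd : ∀ l l', l ≠ l' → Disjoint (piece l) (piece l') := by
    intro l l' hne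
    rw [Finset.disjoint_left]
    intro n h1 h2
    exact Set.disjoint_left.mp (hdisj hne) (hpiece_sub l n h1) (hpiece_sub l' n h2)
  set T : Finset ℕ := G.image f with hT_def
  have hT_piece : ∀ l ∈ T, (piece l).Nonempty := by
    intro l hl
    rcases Finset.mem_image.mp hl with ⟨n, hn, rfl⟩
    rcases Finset.mem_filter.mp hn with ⟨hn1, hn2⟩
    rcases Finset.mem_Icc.mp hn1 with ⟨h1, h2⟩
    exact ⟨n, (hpiece_mem _ n).mpr ⟨⟨h1, h2⟩, hf n hn2⟩⟩
  have hGT : G = T.biUnion piece := by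
    ext n
    constructor
    · intro hn
      rcases Finset.mem_filter.mp hn with ⟨hn1, hn2⟩
      rcases Finset.mem_Icc.mp hn1 with ⟨h1, h2⟩
      exact Finset.mem_biUnion.mpr ⟨f n, Finset.mem_image_of_mem f hn,
        (hpiece_mem _ n).mpr ⟨⟨h1, h2⟩, hf n hn2⟩⟩
    · intro hn
      rcases Finset.mem_biUnion.mp hn with ⟨l, _, hnl⟩
      rw [hpiece_mem] at hnl
      exact Finset.mem_filter.mpr
        ⟨Finset.mem_Icc.mpr ⟨hnl.1.1, hnl.1.2⟩, ⟨l, hnl.2⟩⟩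
  -- rewrite the sum
  have hS1 : ∑ n ∈ Finset.Icc 1 N,
      Complex.exp (2 * Real.pi * Complex.I * (n * s)) * C' n
      = ∑ n ∈ G, z ^ n * C' n := by
    rw [hG_def]
    rw [Finset.sum_filter_of_ne]
    · exact Finset.sum_congr rfl (fun n _ => by rw [hexp n])
    · intro n _ hne
      by_contra hnl
      push_neg at hnl
      rw [hC'0 n hnl, mul_zero] at hne
      exact hne rfl
  have hS2 : ∑ n ∈ G, z ^ n * C' n
      = ∑ l ∈ T, d l * ∑ n ∈ piece l, z ^ n := by
    rw [hGT, Finset.sum_biUnion (fun l _ l' _ h => hpd l l' h)]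
    refine Finset.sum_congr rfl (fun l _ => ?_)
    rw [Finset.mul_sum]
    refine Finset.sum_congr rfl (fun n hn => ?_)
    rw [hC'1 l n (hpiece_sub l n hn)]
    ring
  -- bound the individual terms
  have hterm : ∀ l, ‖d l * ∑ n ∈ piece l, z ^ n‖ ≤ B := by
    intro l
    rw [norm_mul]
    calc ‖d l‖ * ‖∑ n ∈ piece l, z ^ n‖
        ≤ 1 * B := mul_le_mul (hd l) (hgeo _ _) (norm_nonneg _) zero_le_one
      _ = B := one_mul B
  -- split T into three parts
  have hsplit : ‖∑ l ∈ T, d l * ∑ n ∈ piece l, z ^ n‖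
      ≤ B * l0 + δ * N + B := by
    have habs : ‖∑ l ∈ T, d l * ∑ n ∈ piece l, z ^ n‖
        ≤ ∑ l ∈ T, ‖d l * ∑ n ∈ piece l, z ^ n‖ :=
      norm_sum_le _ _
    set g : ℕ → ℝ := fun l => ‖d l * ∑ n ∈ piece l, z ^ n‖ with hg_def
    have hgnn : ∀ l, 0 ≤ g l := fun l => norm_nonneg _
    have hsum2 : ∑ l ∈ T, g l
        = (∑ l ∈ T.filter (fun l => l < l0), g l)
        + ((∑ l ∈ (T.filter (fun l => ¬ l < l0)).filter
              (fun l => a l + L l ≤ N + 1), g l)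
        + (∑ l ∈ (T.filter (fun l => ¬ l < l0)).filter
              (fun l => ¬ a l + L l ≤ N + 1), g l)) := by
      rw [Finset.sum_filter_add_sum_filter_not
        (T.filter (fun l => ¬ l < l0)) (fun l => a l + L l ≤ N + 1) g]
      rw [Finset.sum_filter_add_sum_filter_not T (fun l => l < l0) g]
    -- part 1
    have hpart1 : ∑ l ∈ T.filter (fun l => l < l0), g l ≤ B * l0 := by
      have hsub : T.filter (fun l => l < l0) ⊆ Finset.range l0 := by
        intro x hx
        exact Finset.mem_range.mpr (Finset.mem_filter.mp hx).2
      calc ∑ l ∈ T.filter (fun l => l < l0), g l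
          ≤ ∑ _l ∈ T.filter (fun l => l < l0), B :=
            Finset.sum_le_sum (fun l _ => hterm l)
        _ = (T.filter (fun l => l < l0)).card * B := by
            rw [Finset.sum_const, nsmul_eq_mul]
        _ ≤ (l0 : ℝ) * B := by
            have := Finset.card_le_card hsub
            rw [Finset.card_range] at this
            have h2 : ((T.filter (fun l => l < l0)).card : ℝ) ≤ (l0 : ℝ) := by
              exact_mod_cast this
            exact mul_le_mul_of_nonneg_right h2 hB.le
        _ = B * l0 := by ring
    -- part 2
    have hpart2 : ∑ l ∈ (T.filter (fun l => ¬ l < l0)).filter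
        (fun l => a l + L l ≤ N + 1), g l ≤ δ * N := by
      set S2 := (T.filter (fun l => ¬ l < l0)).filter
        (fun l => a l + L l ≤ N + 1) with hS2_def
      have hterm2 : ∀ l ∈ S2, g l ≤ δ * ((piece l).card : ℝ) := by
        intro l hl
        rcases Finset.mem_filter.mp hl with ⟨hl1, hl2⟩
        rcases Finset.mem_filter.mp hl1 with ⟨_, hl3⟩
        have hLl : M ≤ L l := hl0 l (not_lt.mp hl3)
        have hcard : M - 1 ≤ (piece l).card := by
          rw [hpiece_def]
          rw [Nat.card_Ico]
          omega
        have hcard' : (M : ℝ) - 1 ≤ ((piece l).card : ℝ) := by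
          have h1 : (1 : ℕ) ≤ M := by rw [hM_def]; omega
          have : ((M - 1 : ℕ) : ℝ) ≤ ((piece l).card : ℝ) := by exact_mod_cast hcard
          rw [Nat.cast_sub h1] at this
          simpa using this
        calc g l ≤ B := hterm l
          _ ≤ δ * ((M : ℝ) - 1) := hM
          _ ≤ δ * ((piece l).card : ℝ) := mul_le_mul_of_nonneg_left hcard' hδ.le
      have hcards : ∑ l ∈ S2, ((piece l).card : ℝ) ≤ (N : ℝ) := by
        have h1 : ∑ l ∈ S2, (piece l).card = (S2.biUnion piece).card :=
          (Finset.card_biUnion (fun x _ y _ h => hpd x y h)).symm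
        have h2 : S2.biUnion piece ⊆ Finset.Icc 1 N := by
          intro n hn
          rcases Finset.mem_biUnion.mp hn with ⟨l, _, hnl⟩
          exact hpiece_Icc l hnl
        have h3 : (S2.biUnion piece).card ≤ N := by
          have := Finset.card_le_card h2
          rwa [Nat.card_Icc, Nat.add_sub_cancel] at this
        have h4 : ∑ l ∈ S2, (piece l).card ≤ N := h1 ▸ h3
        calc ∑ l ∈ S2, ((piece l).card : ℝ)
            = ((∑ l ∈ S2, (piece l).card : ℕ) : ℝ) := by push_cast; ring
          _ ≤ (N : ℝ) := by exact_mod_cast h4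
      calc ∑ l ∈ S2, g l ≤ ∑ l ∈ S2, δ * ((piece l).card : ℝ) :=
            Finset.sum_le_sum hterm2
        _ = δ * ∑ l ∈ S2, ((piece l).card : ℝ) := by rw [Finset.mul_sum]
        _ ≤ δ * N := mul_le_mul_of_nonneg_left hcards hδ.le
    -- part 3
    have hpart3 : ∑ l ∈ (T.filter (fun l => ¬ l < l0)).filter
        (fun l => ¬ a l + L l ≤ N + 1), g l ≤ B := by
      set S3 := (T.filter (fun l => ¬ l < l0)).filter
        (fun l => ¬ a l + L l ≤ N + 1) with hS3_def
      have hNmem : ∀ l ∈ S3, N ∈ Set.Ico (a l) (a l + L l) := by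
        intro l hl
        rcases Finset.mem_filter.mp hl with ⟨hl1, hl2⟩
        have hlT : l ∈ T := (Finset.mem_filter.mp hl1).1
        obtain ⟨n, hn⟩ := hT_piece l hlT
        rw [hpiece_mem] at hn
        constructor
        · omega
        · omega
      have hcard3 : S3.card ≤ 1 := by
        rw [Finset.card_le_one]
        intro x hx y hy
        by_contra hne
        exact Set.disjoint_left.mp (hdisj hne) (hNmem x hx) (hNmem y hy)
      calc ∑ l ∈ S3, g l ≤ ∑ _l ∈ S3, B := Finset.sum_le_sum (fun l _ => hterm l)
        _ = S3.card * B := by rw [Finset.sum_const, nsmul_eq_mul]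
        _ ≤ 1 * B := by
            have : (S3.card : ℝ) ≤ 1 := by exact_mod_cast hcard3
            exact mul_le_mul_of_nonneg_right this hB.le
        _ = B := one_mul B
    calc ‖∑ l ∈ T, d l * ∑ n ∈ piece l, z ^ n‖
        ≤ ∑ l ∈ T, g l := habs
      _ = _ := hsum2
      _ ≤ B * l0 + (δ * N + B) := by
          gcongr
      _ = B * l0 + δ * N + B := by ring
  -- finish
  have hStotal : ‖∑ n ∈ Finset.Icc 1 N,
      Complex.exp (2 * Real.pi * Complex.I * (n * s)) * C' n‖ ≤ 2 * δ * N := by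
    rw [hS1, hS2]
    calc ‖∑ l ∈ T, d l * ∑ n ∈ piece l, z ^ n‖
        ≤ B * l0 + δ * N + B := hsplit
      _ ≤ δ * N + δ * N := by linarith
      _ = 2 * δ * N := by ring
  have habsN : ‖1 / (N : ℂ)‖ = 1 / (N : ℝ) := by
    rw [norm_div]
    simp
  rw [norm_mul, habsN]
  calc (1 / (N : ℝ)) * ‖∑ n ∈ Finset.Icc 1 N,
        Complex.exp (2 * Real.pi * Complex.I * (n * s)) * C' n‖
      ≤ (1 / (N : ℝ)) * (2 * δ * N) := by
        apply mul_le_mul_of_nonneg_left hStotal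
        positivity
    _ = 2 * δ := by field_simp
    _ < ε := by rw [hδ_def]; linarith
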